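/- Let A, B be strings of lengths m and n, σ a character, and define Diff[i,j] = LCS(B[i..n], σ·A[0..j]) − P[i,j] for (i,j) ∈ [0:n]×[0:m]. Assume every entry of the density matrix P□ is nonpositive. Then for all 0 ≤ i ≤ n and 0 ≤ j' ≤ j ≤ m, if Diff[i,j] = 1 then Diff[i,j'] = 1. -/

import Mathlib

variable {α : Type*}

/-- LCS of two lists: the maximum length of a common sublist. -/
noncomputable def LCS (X Y : List α) : ℕ :=
  sSup {k | ∃ Z : List α, Z.length = k ∧ Z.Sublist X ∧ Z.Sublist Y}

/-- `substr S i j` is S[i..j]: the characters of S at (1-based) positions i+1,…,j. -/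
def substr (S : List α) (i j : ℕ) : List α := (S.take j).drop i

/-- The density matrix D□ of a matrix D. -/
def density (D : ℕ → ℕ → ℤ) (i j : ℕ) : ℤ :=
  D i j + D (i - 1) (j - 1) - D (i - 1) j - D i (j - 1)

/-- The all scores matrix K of A and B: K[i,j] = LCS(B[i..j], A) if i ≤ j, else j - i. -/
noncomputable def Kmat (A B : List α) (i j : ℕ) : ℤ :=
  if i ≤ j then (LCS (substr B i j) A : ℤ) else (j : ℤ) - (i : ℤ)

/-- The all scores matrix P of A and B: P[i,j] = LCS(B[i..n], A[0..j]). -/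
noncomputable def Pmat (A B : List α) (i j : ℕ) : ℤ :=
  (LCS (substr B i B.length) (substr A 0 j) : ℤ)

/-- nextmatch(i,σ,B): minimum (1-based) position i' with i < i' ≤ |B| and B[i'] = σ; ⊤ (∞) if none. -/
noncomputable def nextmatch (i : ℕ) (σ : α) (B : List α) : ℕ∞ :=
  sInf {k : ℕ∞ | ∃ k' : ℕ, k = (k' : ℕ∞) ∧ i < k' ∧ k' ≤ B.length ∧ B[k' - 1]? = some σ}

/-- prevmatch(j,σ,B): maximum (1-based) position i' with 1 ≤ i' ≤ j and B[i'] = σ; ⊥ (−∞) if none. -/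
noncomputable def prevmatch (j : ℕ) (σ : α) (B : List α) : WithBot ℕ :=
  sSup {k : WithBot ℕ | ∃ k' : ℕ, k = (k' : WithBot ℕ) ∧ 1 ≤ k' ∧ k' ≤ j ∧ B[k' - 1]? = some σ}

lemma lcs_nonempty (X Y : List α) :
    {k | ∃ Z : List α, Z.length = k ∧ Z.Sublist X ∧ Z.Sublist Y}.Nonempty :=
  ⟨0, [], rfl, List.nil_sublist _, List.nil_sublist _⟩

lemma lcs_bdd (X Y : List α) :
    BddAbove {k | ∃ Z : List α, Z.length = k ∧ Z.Sublist X ∧ Z.Sublist Y} :=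
  ⟨X.length, by rintro k ⟨Z, rfl, h1, _⟩; exact h1.length_le⟩

lemma le_LCS {X Y Z : List α} (h1 : Z.Sublist X) (h2 : Z.Sublist Y) :
    Z.length ≤ LCS X Y :=
  le_csSup (lcs_bdd X Y) ⟨Z, rfl, h1, h2⟩

lemma LCS_le {X Y : List α} {k : ℕ}
    (h : ∀ Z : List α, Z.Sublist X → Z.Sublist Y → Z.length ≤ k) : LCS X Y ≤ k :=
  csSup_le (lcs_nonempty X Y) (by rintro _ ⟨Z, rfl, h1, h2⟩; exact h Z h1 h2)

lemma LCS_exists (X Y : List α) :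
    ∃ Z : List α, Z.length = LCS X Y ∧ Z.Sublist X ∧ Z.Sublist Y :=
  Nat.sSup_mem (lcs_nonempty X Y) (lcs_bdd X Y)

lemma LCS_mono_right {X Y Y' : List α} (h : Y.Sublist Y') : LCS X Y ≤ LCS X Y' := by
  obtain ⟨Z, hZ, h1, h2⟩ := LCS_exists X Y
  exact hZ ▸ le_LCS h1 (h2.trans h)

lemma LCS_mono_left {X X' Y : List α} (h : X.Sublist X') : LCS X Y ≤ LCS X' Y := by
  obtain ⟨Z, hZ, h1, h2⟩ := LCS_exists X Y
  exact hZ ▸ le_LCS (h1.trans h) h2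

lemma LCS_cons_of_not_mem {X Y : List α} {σ : α} (h : σ ∉ X) :
    LCS X (σ :: Y) = LCS X Y := by
  refine le_antisymm (LCS_le fun Z hZX hZY => ?_) (LCS_mono_right (List.sublist_cons_self σ Y))
  rcases List.sublist_cons_iff.mp hZY with hZY' | ⟨r, rfl, hr⟩
  · exact le_LCS hZX hZY'
  · exact absurd (hZX.subset (List.mem_cons_self (a := σ) (l := r))) h

lemma LCS_cons_eq (X1 X2 Y : List α) (σ : α) (hσ : σ ∉ X1) :
    LCS (X1 ++ σ :: X2) (σ :: Y) = max (LCS (X1 ++ σ :: X2) Y) (LCS X2 Y + 1) := by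
  refine le_antisymm (LCS_le fun Z hZX hZY => ?_) (max_le ?_ ?_)
  · rcases List.sublist_cons_iff.mp hZY with hZY' | ⟨r, rfl, hr⟩
    · exact le_trans (le_LCS hZX hZY') (le_max_left _ _)
    · obtain ⟨u, v, huv, hu, hv⟩ := List.sublist_append_iff.mp hZX
      have hr2 : r.Sublist X2 := by
        cases u with
        | nil =>
          simp only [List.nil_append] at huv
          exact List.cons_sublist_cons.mp (huv ▸ hv)
        | cons c u =>
          have hc : σ = c := by simpa using congrArg (·.head?) huv
          exact absurd (hu.subset (hc ▸ List.mem_cons_self (a := c) (l := u))) hσ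
      calc (σ :: r).length = r.length + 1 := by simp
        _ ≤ LCS X2 Y + 1 := by exact Nat.add_le_add_right (le_LCS hr2 hr) 1
        _ ≤ _ := le_max_right _ _
  · exact LCS_mono_right (List.sublist_cons_self σ Y)
  · obtain ⟨Z, hZ, h1, h2⟩ := LCS_exists X2 Y
    have hx : (σ :: Z).Sublist (X1 ++ σ :: X2) :=
      (List.cons_sublist_cons.mpr h1).trans (List.sublist_append_right X1 (σ :: X2))
    have hy : (σ :: Z).Sublist (σ :: Y) := List.cons_sublist_cons.mpr h2
    calc LCS X2 Y + 1 = (σ :: Z).length := by simp [hZ]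
      _ ≤ _ := le_LCS hx hy

lemma exists_first {σ : α} {l : List α} (h : σ ∈ l) :
    ∃ s t : List α, l = s ++ σ :: t ∧ σ ∉ s := by
  classical
  induction l with
  | nil => simp at h
  | cons a l ih =>
    by_cases ha : a = σ
    · exact ⟨[], l, by simp [ha], by simp⟩
    · rcases List.mem_cons.mp h with h' | h'
      · exact absurd h'.symm ha
      · obtain ⟨s, t, rfl, hs⟩ := ih h'
        refine ⟨a :: s, t, rfl, ?_⟩
        simp only [List.mem_cons, not_or]
        exact ⟨fun h => ha h.symm, hs⟩

/-- if Diff[i,j] = 1 then Diff[i,j'] = 1 for all 0 ≤ j' ≤ j. -/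
theorem stmt_14 {α : Type*} (A B : List α) (m n : ℕ)
    (hA : A.length = m) (hB : B.length = n) (σ : α)
    (hNonpos : ∀ i, 1 ≤ i → i ≤ n → ∀ j, 1 ≤ j → j ≤ m →
      density (Pmat A B) i j ≤ 0) :
    ∀ i ≤ n, ∀ j ≤ m, ∀ j' ≤ j,
      (LCS (substr B i n) (σ :: substr A 0 j) : ℤ) - Pmat A B i j = 1 →
      (LCS (substr B i n) (σ :: substr A 0 j') : ℤ) - Pmat A B i j' = 1 := by
  intro i hi j hj j' hj' hd
  have hsub : ∀ ii, substr B ii n = B.drop ii := by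
    intro ii; rw [substr, ← hB, List.take_length]
  have hsubA : ∀ jj, substr A 0 jj = A.take jj := by
    intro jj; rw [substr, List.drop_zero]
  have hP : ∀ ii jj, Pmat A B ii jj = (LCS (B.drop ii) (A.take jj) : ℤ) := by
    intro ii jj; rw [Pmat, hB, hsub, hsubA]
  rw [hsub, hsubA] at hd ⊢
  by_cases hσ : σ ∈ B.drop i
  · -- decompose at first occurrence of σ
    obtain ⟨X1, X2, hsplit, hX1⟩ := exists_first hσ
    set i'' := i + X1.length + 1 with hi''def
    have hlen : (B.drop i).length = n - i := by simp [hB]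
    have hlen2 : n - i = X1.length + 1 + X2.length := by
      rw [← hlen, hsplit]; simp; omega
    have hi''n : i'' ≤ n := by omega
    have hdrop : B.drop i'' = X2 := by
      have : B.drop i'' = (B.drop i).drop (X1.length + 1) := by
        rw [List.drop_drop]; congr 1
      rw [this, hsplit, ← List.drop_drop, List.drop_left]
      simp
    -- the key formula
    have key : ∀ jj, LCS (B.drop i) (σ :: A.take jj) =
        max (LCS (B.drop i) (A.take jj)) (LCS X2 (A.take jj) + 1) := by
      intro jj; rw [hsplit]; exact LCS_cons_eq X1 X2 _ σ hX1
    have hX2sub : X2.Sublist (B.drop i) := by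
      rw [hsplit]
      exact (List.sublist_cons_self σ X2).trans (List.sublist_append_right X1 (σ :: X2))
    -- monotonicity of row differences from the anti-Monge hypothesis
    have colstep : ∀ r c, r + 1 ≤ n → c + 1 ≤ m →
        Pmat A B (r+1) (c+1) - Pmat A B (r+1) c ≤ Pmat A B r (c+1) - Pmat A B r c := by
      intro r c hr hc
      have := hNonpos (r+1) (by omega) hr (c+1) (by omega) hc
      simp only [density, Nat.add_sub_cancel] at this
      linarith
    have rowstep : ∀ r, r + 1 ≤ n → ∀ jj, j' ≤ jj → jj ≤ m →
        Pmat A B (r+1) jj - Pmat A B (r+1) j' ≤ Pmat A B r jj - Pmat A B r j' := by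
      intro r hr jj hle hm
      induction jj, hle using Nat.le_induction with
      | base => simp
      | succ k hk ih =>
        have h1 := colstep r k hr (by omega)
        have h2 := ih (by omega)
        linarith
    have rowsdiff : ∀ i2, i ≤ i2 → i2 ≤ n → ∀ jj, j' ≤ jj → jj ≤ m →
        Pmat A B i2 jj - Pmat A B i2 j' ≤ Pmat A B i jj - Pmat A B i j' := by
      intro i2 hle hn jj hjle hjm
      induction i2, hle using Nat.le_induction with
      | base => simp
      | succ k hk ih =>
        have h1 := rowstep k hn jj hjle hjm
        have h2 := ih (by omega)
        linarith
    -- from hd at j : LCS X2 (A.take j) = LCS (B.drop i) (A.take j)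
    have hgj : (LCS (B.drop i) (σ :: A.take j) : ℤ) = Pmat A B i j + 1 := by linarith
    rw [hP] at hgj
    have hgjn : LCS (B.drop i) (σ :: A.take j) = LCS (B.drop i) (A.take j) + 1 := by
      exact_mod_cast hgj
    have hmax := key j
    rw [hgjn] at hmax
    have hhg : LCS X2 (A.take j) = LCS (B.drop i) (A.take j) := by
      rcases max_choice (LCS (B.drop i) (A.take j)) (LCS X2 (A.take j) + 1) with h | h <;>
        rw [h] at hmax
      · omega
      · have := LCS_mono_left (Y := A.take j) hX2sub
        omega
    -- transfer to j'
    have hmono := rowsdiff i'' (by omega) hi''n j hj' hj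
    rw [hP, hP, hP, hP, hdrop] at hmono
    have hhg' : LCS X2 (A.take j') = LCS (B.drop i) (A.take j') := by
      have h1 := LCS_mono_left (Y := A.take j') hX2sub
      have h2 : (LCS (B.drop i) (A.take j') : ℤ) ≤ (LCS X2 (A.take j') : ℤ) := by
        rw [hhg] at hmono; linarith
      have h2' : LCS (B.drop i) (A.take j') ≤ LCS X2 (A.take j') := by exact_mod_cast h2
      omega
    rw [key j', hhg', hP]
    have : max (LCS (B.drop i) (A.take j')) (LCS (B.drop i) (A.take j') + 1)
        = LCS (B.drop i) (A.take j') + 1 := by omega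
    rw [this]
    push_cast
    ring
  · -- σ not in B.drop i : Diff is always 0, contradiction
    rw [LCS_cons_of_not_mem hσ, hP] at hd
    simp at hd
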